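/- Normal ellipticity of the principal symbol: if T > 0 is a real number, then every complex eigenvalue of the matrix T · F_0^{−1} is real and lies in the interval (T η^{−1}, T δ^{−1}]; in particular, every eigenvalue of T · F_0^{−1} has strictly positive real part. -/

import Mathlib

set_option maxHeartbeats 1600000

open Finset Complex

private lemma sum_erase_swap {α M : Type*} [Fintype α] [DecidableEq α] [AddCommGroup M]
    (f : α → α → M) :
    ∑ i, ∑ j ∈ Finset.univ.erase i, f i j = ∑ i, ∑ j ∈ Finset.univ.erase i, f j i := by
  have h : ∀ g : α → α → M, ∑ i, ∑ j ∈ Finset.univ.erase i, g i j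
      = (∑ i, ∑ j, g i j) - ∑ i, g i i := by
    intro g
    rw [← Finset.sum_sub_distrib]
    exact Finset.sum_congr rfl fun i _ => Finset.sum_erase_eq_sub (Finset.mem_univ i)
  rw [h, h, Finset.sum_comm (f := fun i j => f j i)]

private lemma normSq_sub_le' (a b : ℂ) :
    Complex.normSq (a - b) ≤ 2 * Complex.normSq a + 2 * Complex.normSq b := by
  simp only [Complex.normSq_apply, Complex.sub_re, Complex.sub_im]
  nlinarith [sq_nonneg (a.re + b.re), sq_nonneg (a.im + b.im)]

/-- The reduced Maxwell–Stefan matrix `F₀` with entries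
`[F₀] i j = -(k i j - k i n) * c i` for `i ≠ j` and
`[F₀] i i = ∑_{j ≠ i, j ≤ n-1} (k i j - k i n) * c j + c_tot * k i n`,
where `c_tot = ∑ r, c r`. The number of species is `m + 1` (the paper's `n`),
and the paper's index `n` is `Fin.last m`. -/
def MSmatF0 (m : ℕ) (k : Fin (m + 1) → Fin (m + 1) → ℝ)
    (c : Fin (m + 1) → ℝ) : Matrix (Fin m) (Fin m) ℝ :=
  Matrix.of fun i j =>
    if i = j then
      (∑ j' ∈ Finset.univ.erase i,
          (k i.castSucc j'.castSucc - k i.castSucc (Fin.last m)) * c j'.castSucc)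
        + (∑ r, c r) * k i.castSucc (Fin.last m)
    else -((k i.castSucc j.castSucc - k i.castSucc (Fin.last m)) * c i.castSucc)

private lemma MSkey (m : ℕ) (hm : 1 ≤ m)
    (k : Fin (m + 1) → Fin (m + 1) → ℝ)
    (hsymm : ∀ i j, k i j = k j i)
    (hkpos : ∀ i j, i ≠ j → 0 < k i j)
    (c : Fin (m + 1) → ℝ)
    (hc : ∀ i, 0 ≤ c i)
    (cmin cmax : ℝ)
    (hcmin : 0 < cmin)
    (hmin : cmin ≤ ∑ i, c i)
    (hmax : ∑ i, c i ≤ cmax)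
    (δ₀ : ℝ)
    (hδ₀ : IsLeast {x : ℝ | ∃ i j : Fin (m + 1), i ≠ j ∧ k i j = x} δ₀)
    (lam : ℂ) (v : Fin m → ℂ) (hv0 : v ≠ 0)
    (hv : ((MSmatF0 m k c).map Complex.ofReal).mulVec v = lam • v) :
    ∃ l : ℝ, lam = (l : ℂ) ∧ cmin * δ₀ ≤ l ∧
      l < 2 * cmax * ∑ i : Fin (m + 1), ∑ j ∈ Finset.univ.erase i, k i j := by
  -- basic positivity facts
  have hδ₀pos : 0 < δ₀ := by
    obtain ⟨i, j, hij, hk⟩ := hδ₀.1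
    exact hk ▸ hkpos i j hij
  have hδ₀le : ∀ i j : Fin (m+1), i ≠ j → δ₀ ≤ k i j := fun i j h => hδ₀.2 ⟨i, j, h, rfl⟩
  have hctot : 0 < ∑ i, c i := lt_of_lt_of_le hcmin hmin
  have hcmax : 0 < cmax := lt_of_lt_of_le hctot hmax
  have hcle : ∀ i, c i ≤ cmax := fun i =>
    le_trans (Finset.single_le_sum (fun j _ => hc j) (Finset.mem_univ i)) hmax
  have hexne : ∀ i : Fin (m+1), ∃ j, j ≠ i := by
    intro i
    rcases eq_or_ne i 0 with h | h
    · refine ⟨Fin.last m, ?_⟩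
      rw [h]
      intro hh
      have := congrArg Fin.val hh
      simp [Fin.last] at this
      omega
    · exact ⟨0, Ne.symm h⟩
  set K : ℝ := ∑ i : Fin (m+1), ∑ j ∈ Finset.univ.erase i, k i j with hK
  set r : Fin (m+1) → ℝ := fun i => ∑ j ∈ Finset.univ.erase i, k i j with hr
  have hrpos : ∀ i, 0 < r i := by
    intro i
    obtain ⟨j, hj⟩ := hexne i
    refine Finset.sum_pos (fun l hl => hkpos i l (Ne.symm (Finset.ne_of_mem_erase hl))) ⟨j, ?_⟩
    simp [Finset.mem_erase, hj]
  have hKpos : 0 < K := Finset.sum_pos (fun i _ => hrpos i) ⟨0, Finset.mem_univ 0⟩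
  set ρ : ℝ := Finset.univ.inf' ⟨0, Finset.mem_univ 0⟩ r with hρ
  have hρpos : 0 < ρ := by
    obtain ⟨i, _, hi⟩ := Finset.exists_mem_eq_inf' (s := Finset.univ) ⟨0, Finset.mem_univ 0⟩ r
    exact (hrpos i).trans_eq hi.symm
  have hρle : ∀ i, r i ≤ K - ρ := by
    intro i
    obtain ⟨j, hj⟩ := hexne i
    have h1 : r i + ∑ l ∈ Finset.univ.erase i, r l = K := by
      rw [hK, Finset.add_sum_erase _ _ (Finset.mem_univ i)]
    have h2 : ρ ≤ ∑ l ∈ Finset.univ.erase i, r l := by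
      refine le_trans (Finset.inf'_le _ (Finset.mem_univ j)) ?_
      refine Finset.single_le_sum (fun l _ => (hrpos l).le) ?_
      simp [Finset.mem_erase, hj]
    linarith
  -- the extended eigenvector
  set w : Fin (m+1) → ℂ := Fin.snoc v (-(∑ i, v i)) with hw
  have hwcs : ∀ i : Fin m, w i.castSucc = v i := fun i => Fin.snoc_castSucc _ _ _
  have hwlast : w (Fin.last m) = -(∑ i, v i) := Fin.snoc_last _ _
  have hwsum : ∑ i, w i = 0 := by
    rw [Fin.sum_univ_castSucc, hwlast]
    simp [hwcs]
  have hwne : ∃ i, w i ≠ 0 := by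
    obtain ⟨i, hi⟩ := Function.ne_iff.1 hv0
    exact ⟨i.castSucc, by rwa [hwcs]⟩
  -- the eigen-equation for the full system
  have hrow : ∀ i : Fin m,
      ∑ j, (k i.castSucc j : ℂ) * ((c j : ℂ) * w i.castSucc - (c i.castSucc : ℂ) * w j)
        = lam * w i.castSucc := by
    intro i
    have hvi := congrFun hv i
    simp only [Matrix.mulVec, dotProduct, Matrix.map_apply, MSmatF0, Matrix.of_apply,
      Pi.smul_apply, smul_eq_mul] at hvi
    rw [← Finset.add_sum_erase _ _ (Finset.mem_univ i), if_pos rfl] at hvi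
    have hite : ∑ x ∈ Finset.univ.erase i,
        (((if i = x then
            (∑ j' ∈ Finset.univ.erase i,
              (k i.castSucc j'.castSucc - k i.castSucc (Fin.last m)) * c j'.castSucc)
              + (∑ r, c r) * k i.castSucc (Fin.last m)
          else -((k i.castSucc x.castSucc - k i.castSucc (Fin.last m)) * c i.castSucc)) : ℝ) : ℂ) * v x
        = ∑ x ∈ Finset.univ.erase i,
            ((-((k i.castSucc x.castSucc - k i.castSucc (Fin.last m)) * c i.castSucc) : ℝ) : ℂ) * v x :=
      Finset.sum_congr rfl fun x hx => by rw [if_neg (Finset.ne_of_mem_erase hx).symm]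
    rw [hite] at hvi
    push_cast at hvi
    rw [Fin.sum_univ_castSucc]
    simp only [hwcs, hwlast]
    rw [← Finset.add_sum_erase _ _ (Finset.mem_univ i)]
    have e1 : ∑ j ∈ Finset.univ.erase i,
        (k i.castSucc j.castSucc : ℂ) * ((c j.castSucc : ℂ) * v i - (c i.castSucc : ℂ) * v j)
        = (∑ j ∈ Finset.univ.erase i, (k i.castSucc j.castSucc : ℂ) * (c j.castSucc : ℂ)) * v i
          - (c i.castSucc : ℂ) * ∑ j ∈ Finset.univ.erase i, (k i.castSucc j.castSucc : ℂ) * v j := by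
      rw [Finset.sum_mul, Finset.mul_sum, ← Finset.sum_sub_distrib]
      exact Finset.sum_congr rfl fun j _ => by ring
    have e2 : ∑ j ∈ Finset.univ.erase i,
        ((k i.castSucc j.castSucc : ℂ) - (k i.castSucc (Fin.last m) : ℂ)) * (c j.castSucc : ℂ)
        = (∑ j ∈ Finset.univ.erase i, (k i.castSucc j.castSucc : ℂ) * (c j.castSucc : ℂ))
          - (k i.castSucc (Fin.last m) : ℂ) * ∑ j ∈ Finset.univ.erase i, (c j.castSucc : ℂ) := by
      rw [Finset.mul_sum, ← Finset.sum_sub_distrib]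
      exact Finset.sum_congr rfl fun j _ => by ring
    have e3 : ∑ j ∈ Finset.univ.erase i,
        -(((k i.castSucc j.castSucc : ℂ) - (k i.castSucc (Fin.last m) : ℂ)) * (c i.castSucc : ℂ)) * v j
        = -((c i.castSucc : ℂ) * ∑ j ∈ Finset.univ.erase i, (k i.castSucc j.castSucc : ℂ) * v j)
          + (k i.castSucc (Fin.last m) : ℂ) * (c i.castSucc : ℂ)
            * ∑ j ∈ Finset.univ.erase i, v j := by
      rw [Finset.mul_sum, Finset.mul_sum, ← Finset.sum_neg_distrib, ← Finset.sum_add_distrib]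
      exact Finset.sum_congr rfl fun j _ => by ring
    have e4 : (∑ r : Fin (m+1), (c r : ℂ))
        = (c i.castSucc : ℂ) + ∑ j ∈ Finset.univ.erase i, (c j.castSucc : ℂ) + (c (Fin.last m) : ℂ) := by
      rw [Fin.sum_univ_castSucc, ← Finset.add_sum_erase _ _ (Finset.mem_univ i)]
    have e5 : (∑ j : Fin m, v j) = v i + ∑ j ∈ Finset.univ.erase i, v j :=
      (Finset.add_sum_erase _ _ (Finset.mem_univ i)).symm
    rw [e2, e3, e4] at hvi
    rw [e1, e5]
    linear_combination hvi
  have heig : ∀ i : Fin (m+1),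
      ∑ j, (k i j : ℂ) * ((c j : ℂ) * w i - (c i : ℂ) * w j) = lam * w i := by
    have htot : ∑ i : Fin (m+1), (∑ j, (k i j : ℂ) * ((c j : ℂ) * w i - (c i : ℂ) * w j)) = 0 := by
      have h1 : ∑ i : Fin (m+1), ∑ j, (k i j : ℂ) * ((c j : ℂ) * w i)
          = ∑ i : Fin (m+1), ∑ j, (k i j : ℂ) * ((c i : ℂ) * w j) := by
        rw [Finset.sum_comm (f := fun i j => (k i j : ℂ) * ((c i : ℂ) * w j))]
        exact Finset.sum_congr rfl fun i _ => Finset.sum_congr rfl fun j _ => by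
          rw [hsymm j i]
      calc ∑ i : Fin (m+1), (∑ j, (k i j : ℂ) * ((c j : ℂ) * w i - (c i : ℂ) * w j))
          = (∑ i : Fin (m+1), ∑ j, (k i j : ℂ) * ((c j : ℂ) * w i))
            - ∑ i : Fin (m+1), ∑ j, (k i j : ℂ) * ((c i : ℂ) * w j) := by
            rw [← Finset.sum_sub_distrib]
            exact Finset.sum_congr rfl fun i _ => by
              rw [← Finset.sum_sub_distrib]
              exact Finset.sum_congr rfl fun j _ => by ring
        _ = 0 := by rw [h1, sub_self]
    intro i
    induction i using Fin.lastCases with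
    | cast i => exact hrow i
    | last =>
      rw [Fin.sum_univ_castSucc] at htot
      rw [Finset.sum_congr rfl (fun i (_ : i ∈ Finset.univ) => hrow i)] at htot
      rw [← Finset.mul_sum] at htot
      have hs : ∑ i : Fin m, w i.castSucc = ∑ i : Fin m, v i :=
        Finset.sum_congr rfl fun i _ => hwcs i
      rw [hs] at htot
      rw [hwlast] at htot ⊢
      linear_combination htot
  clear hv hrow hv0
  by_cases hA : ∃ i, c i = 0 ∧ w i ≠ 0
  · obtain ⟨i0, hc0, hw0⟩ := hA
    have h := heig i0
    rw [hc0] at h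
    simp only [Complex.ofReal_zero, zero_mul, sub_zero] at h
    have h' : ((∑ j, k i0 j * c j : ℝ) : ℂ) * w i0 = lam * w i0 := by
      push_cast
      rw [Finset.sum_mul, ← h]
      exact Finset.sum_congr rfl fun j _ => by ring
    have hl : lam = ((∑ j, k i0 j * c j : ℝ) : ℂ) := (mul_right_cancel₀ hw0 h').symm
    refine ⟨∑ j, k i0 j * c j, hl, ?_, ?_⟩
    · have h1 : ∀ j, δ₀ * c j ≤ k i0 j * c j := by
        intro j
        rcases eq_or_ne j i0 with rfl | hj
        · rw [hc0]; simp
        · exact mul_le_mul_of_nonneg_right (hδ₀le i0 j (Ne.symm hj)) (hc j)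
      calc cmin * δ₀ ≤ (∑ i, c i) * δ₀ := by nlinarith
        _ = ∑ j, δ₀ * c j := by
            rw [Finset.sum_mul]; exact Finset.sum_congr rfl fun j _ => by ring
        _ ≤ ∑ j, k i0 j * c j := Finset.sum_le_sum fun j _ => h1 j
    · have h2 : ∑ j, k i0 j * c j = ∑ j ∈ Finset.univ.erase i0, k i0 j * c j := by
        rw [← Finset.add_sum_erase _ _ (Finset.mem_univ i0), hc0, mul_zero, zero_add]
      have h3 : ∑ j ∈ Finset.univ.erase i0, k i0 j * c j
          ≤ ∑ j ∈ Finset.univ.erase i0, k i0 j * cmax :=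
        Finset.sum_le_sum fun j hj => mul_le_mul_of_nonneg_left (hcle j)
          (hkpos i0 j (Finset.ne_of_mem_erase hj).symm).le
      have h4 : ∑ j ∈ Finset.univ.erase i0, k i0 j * cmax = r i0 * cmax := by
        rw [hr, Finset.sum_mul]
      have h5 := hρle i0
      nlinarith [hρpos, hKpos, hcmax]
  · push_neg at hA
    set s : Fin (m+1) → ℝ := fun i => Real.sqrt (c i) with hsdef
    have hs2 : ∀ i, s i ^ 2 = c i := fun i => Real.sq_sqrt (hc i)
    have hs0 : ∀ i, s i = 0 → w i = 0 := fun i h => hA i (by rw [← hs2 i, h]; ring)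
    obtain ⟨x, hxdef⟩ : ∃ x : Fin (m+1) → ℂ, x = fun i => w i * ((s i : ℂ))⁻¹ := ⟨_, rfl⟩
    have hwx : ∀ i, w i = (s i : ℂ) * x i := by
      intro i
      rcases eq_or_ne (s i) 0 with h | h
      · rw [hxdef]; simp [h, hs0 i h]
      · rw [hxdef]
        have : ((s i : ℝ) : ℂ) ≠ 0 := Complex.ofReal_ne_zero.2 h
        field_simp
    have hcs : ∀ i, (c i : ℂ) = (s i : ℂ) ^ 2 := fun i => by rw [← hs2 i]; push_cast; ring
    set N : ℝ := ∑ i, Complex.normSq (x i) with hN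
    have hNpos : 0 < N := by
      obtain ⟨i, hi⟩ := hwne
      have hxi : x i ≠ 0 := fun h => hi (by rw [hwx i, h, mul_zero])
      exact Finset.sum_pos' (fun j _ => Complex.normSq_nonneg _)
        ⟨i, Finset.mem_univ i, Complex.normSq_pos.2 hxi⟩
    set Q : ℝ := ∑ i, ∑ j ∈ Finset.univ.erase i,
        k i j * Complex.normSq ((s j : ℂ) * x i - (s i : ℂ) * x j) with hQ
    have hmain : lam * (N : ℂ) = (Q : ℂ) / 2 := by
      have hx0 : ∀ i, c i = 0 → x i = 0 := by
        intro i h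
        rw [hxdef]
        simp [hA i h]
      -- Step 1: the weighted Rayleigh sum equals `lam * N`
      have step1 : ∑ i, (starRingEnd ℂ) (w i) * ((c i : ℂ))⁻¹ * (lam * w i)
          = lam * (N : ℂ) := by
        rw [hN]
        push_cast
        rw [Finset.mul_sum]
        refine Finset.sum_congr rfl fun i _ => ?_
        rcases eq_or_ne (c i) 0 with h | h
        · rw [hA i h, hx0 i h]
          simp
        · have h1 : Complex.normSq (x i) = Complex.normSq (w i) / c i := by
            rw [hxdef]
            simp only
            rw [Complex.normSq_mul, Complex.normSq_inv, Complex.normSq_ofReal, ← hs2 i]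
            rw [div_eq_mul_inv]
            ring_nf
          have h2 : ((c i : ℝ) : ℂ) ≠ 0 := Complex.ofReal_ne_zero.2 h
          rw [h1]
          push_cast
          rw [Complex.normSq_eq_conj_mul_self]
          field_simp
      -- Step 2: rewrite using the eigen-equation
      have step2 : ∑ i, (starRingEnd ℂ) (w i) * ((c i : ℂ))⁻¹ * (lam * w i)
          = ∑ i, ∑ j, (k i j : ℂ) * ((starRingEnd ℂ) (x i))
              * ((s j : ℂ)^2 * x i - (s i : ℂ) * (s j : ℂ) * x j) := by
        refine Finset.sum_congr rfl fun i _ => ?_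
        rw [← heig i, Finset.mul_sum]
        refine Finset.sum_congr rfl fun j _ => ?_
        rcases eq_or_ne (c i) 0 with h | h
        · rw [hA i h, hx0 i h]
          simp
        · have hsne : ((s i : ℝ) : ℂ) ≠ 0 := by
            rw [Complex.ofReal_ne_zero]
            intro hz
            exact h (by rw [← hs2 i, hz]; ring)
          rw [hwx i, hwx j, hcs i, hcs j, map_mul, Complex.conj_ofReal]
          field_simp
      -- Step 3: express Q as a conjugate-product double sum
      have step3 : (Q : ℂ) = ∑ i, ∑ j, (k i j : ℂ)
          * ((starRingEnd ℂ) ((s j : ℂ) * x i - (s i : ℂ) * x j)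
            * ((s j : ℂ) * x i - (s i : ℂ) * x j)) := by
        rw [hQ]
        push_cast
        refine Finset.sum_congr rfl fun i _ => ?_
        rw [Finset.sum_erase_eq_sub (Finset.mem_univ i)]
        simp only [Complex.normSq_eq_conj_mul_self]
        rw [sub_self, map_zero, mul_zero, mul_zero, sub_zero]
      -- Step 4: antisymmetry
      set G : Fin (m+1) → Fin (m+1) → ℂ := fun i j =>
        2 * ((k i j : ℂ) * ((starRingEnd ℂ) (x i))
              * ((s j : ℂ)^2 * x i - (s i : ℂ) * (s j : ℂ) * x j))
          - (k i j : ℂ) * ((starRingEnd ℂ) ((s j : ℂ) * x i - (s i : ℂ) * x j)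
            * ((s j : ℂ) * x i - (s i : ℂ) * x j)) with hG
      have hGanti : ∀ i j, G j i = - G i j := by
        intro i j
        rw [hG]
        simp only [map_sub, map_mul, Complex.conj_ofReal]
        rw [hsymm j i]
        ring
      have hGzero : ∑ i, ∑ j, G i j = 0 := by
        have h1 : ∑ i, ∑ j, G i j = ∑ i, ∑ j, G j i := Finset.sum_comm
        have h2 : ∑ i, ∑ j, G j i = ∑ i, ∑ j, -(G i j) :=
          Finset.sum_congr rfl fun i _ => Finset.sum_congr rfl fun j _ => hGanti i j
        have h3 : ∑ i, ∑ j, -(G i j) = -(∑ i, ∑ j, G i j) := by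
          simp [Finset.sum_neg_distrib]
        exact CharZero.eq_neg_self_iff.mp (h1.trans (h2.trans h3))
      have hGsum : ∑ i, ∑ j, G i j
          = 2 * (∑ i, ∑ j, (k i j : ℂ) * ((starRingEnd ℂ) (x i))
              * ((s j : ℂ)^2 * x i - (s i : ℂ) * (s j : ℂ) * x j)) - (Q : ℂ) := by
        rw [step3, hG]
        rw [Finset.mul_sum, ← Finset.sum_sub_distrib]
        refine Finset.sum_congr rfl fun i _ => ?_
        rw [Finset.mul_sum, ← Finset.sum_sub_distrib]
      rw [← step1, step2]
      rw [hGsum] at hGzero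
      linear_combination hGzero / 2
    have hlam : lam = ((Q / (2*N) : ℝ) : ℂ) := by
      have hNne : ((N : ℝ) : ℂ) ≠ 0 := Complex.ofReal_ne_zero.2 (ne_of_gt hNpos)
      push_cast
      field_simp
      linear_combination 2 * hmain
    have hW : ∑ i, (s i : ℂ) * x i = 0 := by
      rw [← hwsum]
      exact Finset.sum_congr rfl fun i _ => (hwx i).symm
    have hWc : ∑ i, (starRingEnd ℂ) (x i) * (s i : ℂ) = 0 := by
      have h0 := congrArg (starRingEnd ℂ) hW
      rw [map_sum, map_zero] at h0
      rw [← h0]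
      exact Finset.sum_congr rfl fun i _ => by
        simp only [map_mul, Complex.conj_ofReal]; ring
    have hxN : ∑ i, (starRingEnd ℂ) (x i) * x i = ((N : ℝ) : ℂ) := by
      rw [hN]
      push_cast
      exact Finset.sum_congr rfl fun i _ => (Complex.normSq_eq_conj_mul_self).symm
    have hsc : ∑ i, (s i : ℂ) * (s i : ℂ) = ((∑ i, c i : ℝ) : ℂ) := by
      push_cast
      refine Finset.sum_congr rfl fun i _ => ?_
      rw [hcs i]; ring
    refine ⟨Q / (2*N), hlam, ?_, ?_⟩
    · have hQlow : δ₀ * (2 * (∑ i, c i) * N) ≤ Q := by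
        have hS : ∑ i, ∑ j, Complex.normSq ((s j : ℂ) * x i - (s i : ℂ) * x j)
            = 2 * (∑ i, c i) * N := by
          have hSc : ((∑ i, ∑ j, Complex.normSq ((s j : ℂ) * x i - (s i : ℂ) * x j) : ℝ) : ℂ)
              = ((2 * (∑ i, c i) * N : ℝ) : ℂ) := by
            have e1 : ∀ i j : Fin (m+1),
                ((Complex.normSq ((s j : ℂ) * x i - (s i : ℂ) * x j) : ℝ) : ℂ)
                = ((starRingEnd ℂ) (x i) * x i) * ((s j : ℂ) * (s j : ℂ))
                  + ((starRingEnd ℂ) (x j) * x j) * ((s i : ℂ) * (s i : ℂ))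
                  - (((starRingEnd ℂ) (x i) * (s i : ℂ)) * ((s j : ℂ) * x j)
                    + ((starRingEnd ℂ) (x j) * (s j : ℂ)) * ((s i : ℂ) * x i)) := by
              intro i j
              rw [Complex.normSq_eq_conj_mul_self, map_sub, map_mul, map_mul,
                Complex.conj_ofReal, Complex.conj_ofReal]
              ring
            push_cast
            push_cast at e1
            rw [Finset.sum_congr rfl fun (i : Fin (m+1)) _ =>
              Finset.sum_congr rfl fun (j : Fin (m+1)) _ => e1 i j]
            simp only [Finset.sum_add_distrib, Finset.sum_sub_distrib]
            have f1 : ∑ i : Fin (m+1), ∑ j : Fin (m+1),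
                ((starRingEnd ℂ) (x i) * x i) * ((s j : ℂ) * (s j : ℂ))
                = (∑ i, (starRingEnd ℂ) (x i) * x i) * (∑ j, (s j : ℂ) * (s j : ℂ)) :=
              (Finset.sum_mul_sum _ _ _ _).symm
            have f2 : ∑ i : Fin (m+1), ∑ j : Fin (m+1),
                ((starRingEnd ℂ) (x j) * x j) * ((s i : ℂ) * (s i : ℂ))
                = (∑ j, (starRingEnd ℂ) (x j) * x j) * (∑ i, (s i : ℂ) * (s i : ℂ)) := by
              rw [Finset.sum_comm]
              exact (Finset.sum_mul_sum _ _ _ _).symm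
            have f3 : ∑ i : Fin (m+1), ∑ j : Fin (m+1),
                ((starRingEnd ℂ) (x i) * (s i : ℂ)) * ((s j : ℂ) * x j)
                = (∑ i, (starRingEnd ℂ) (x i) * (s i : ℂ)) * (∑ j, (s j : ℂ) * x j) :=
              (Finset.sum_mul_sum _ _ _ _).symm
            have f4 : ∑ i : Fin (m+1), ∑ j : Fin (m+1),
                ((starRingEnd ℂ) (x j) * (s j : ℂ)) * ((s i : ℂ) * x i)
                = (∑ j, (starRingEnd ℂ) (x j) * (s j : ℂ)) * (∑ i, (s i : ℂ) * x i) := by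
              rw [Finset.sum_comm]
              exact (Finset.sum_mul_sum _ _ _ _).symm
            rw [f1, f2, f3, f4, hWc, hW, hxN, hsc]
            push_cast
            ring
          exact_mod_cast hSc
        have hdiag : ∀ i : Fin (m+1),
            ∑ j ∈ Finset.univ.erase i, Complex.normSq ((s j : ℂ) * x i - (s i : ℂ) * x j)
            = ∑ j, Complex.normSq ((s j : ℂ) * x i - (s i : ℂ) * x j) := by
          intro i
          rw [Finset.sum_erase_eq_sub (Finset.mem_univ i)]
          simp
        calc δ₀ * (2 * (∑ i, c i) * N)
            = ∑ i, δ₀ * ∑ j ∈ Finset.univ.erase i,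
                Complex.normSq ((s j : ℂ) * x i - (s i : ℂ) * x j) := by
              rw [← hS, Finset.mul_sum]
              exact Finset.sum_congr rfl fun i _ => by rw [hdiag i]
          _ = ∑ i, ∑ j ∈ Finset.univ.erase i,
                δ₀ * Complex.normSq ((s j : ℂ) * x i - (s i : ℂ) * x j) :=
              Finset.sum_congr rfl fun i _ => Finset.mul_sum _ _ _
          _ ≤ Q := by
              rw [hQ]
              refine Finset.sum_le_sum fun i _ => Finset.sum_le_sum fun j hj => ?_
              exact mul_le_mul_of_nonneg_right
                (hδ₀le i j (Finset.ne_of_mem_erase hj).symm) (Complex.normSq_nonneg _)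
      rw [le_div_iff₀ (by positivity)]
      nlinarith [hQlow, mul_le_mul_of_nonneg_right hmin
        (mul_nonneg (mul_nonneg (by norm_num : (0:ℝ) ≤ 2) hδ₀pos.le) hNpos.le)]
    · have hQhigh : Q ≤ 4 * cmax * (K - ρ) * N := by
        have h1 : Q ≤ ∑ i, ∑ j ∈ Finset.univ.erase i,
            2 * cmax * (k i j * (Complex.normSq (x i) + Complex.normSq (x j))) := by
          rw [hQ]
          refine Finset.sum_le_sum fun i _ => Finset.sum_le_sum fun j hj => ?_
          have hk := (hkpos i j (Finset.ne_of_mem_erase hj).symm).le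
          have hsub := normSq_sub_le' ((s j : ℂ) * x i) ((s i : ℂ) * x j)
          have h2 : Complex.normSq ((s j : ℂ) * x i) = c j * Complex.normSq (x i) := by
            rw [Complex.normSq_mul, Complex.normSq_ofReal, ← hs2 j]; ring
          have h3 : Complex.normSq ((s i : ℂ) * x j) = c i * Complex.normSq (x j) := by
            rw [Complex.normSq_mul, Complex.normSq_ofReal, ← hs2 i]; ring
          rw [h2, h3] at hsub
          nlinarith [mul_le_mul_of_nonneg_left hsub hk,
            mul_nonneg (mul_nonneg hk (sub_nonneg.2 (hcle j))) (Complex.normSq_nonneg (x i)),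
            mul_nonneg (mul_nonneg hk (sub_nonneg.2 (hcle i))) (Complex.normSq_nonneg (x j))]
        have h2 : ∑ i, ∑ j ∈ Finset.univ.erase i,
            2 * cmax * (k i j * (Complex.normSq (x i) + Complex.normSq (x j)))
            = 2 * cmax * ((∑ i, ∑ j ∈ Finset.univ.erase i, k i j * Complex.normSq (x i))
              + ∑ i, ∑ j ∈ Finset.univ.erase i, k i j * Complex.normSq (x j)) := by
          rw [← Finset.sum_add_distrib, Finset.mul_sum]
          refine Finset.sum_congr rfl fun i _ => ?_
          rw [← Finset.sum_add_distrib, Finset.mul_sum]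
          exact Finset.sum_congr rfl fun j _ => by ring
        have h3 : ∑ i, ∑ j ∈ Finset.univ.erase i, k i j * Complex.normSq (x j)
            = ∑ i, ∑ j ∈ Finset.univ.erase i, k i j * Complex.normSq (x i) := by
          rw [sum_erase_swap (f := fun i j => k i j * Complex.normSq (x j))]
          exact Finset.sum_congr rfl fun i _ => Finset.sum_congr rfl fun j _ => by
            rw [hsymm j i]
        have h4 : ∑ i, ∑ j ∈ Finset.univ.erase i, k i j * Complex.normSq (x i)
            = ∑ i, r i * Complex.normSq (x i) := by
          refine Finset.sum_congr rfl fun i _ => ?_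
          rw [hr, Finset.sum_mul]
        have h5 : ∑ i, r i * Complex.normSq (x i) ≤ ∑ i, (K - ρ) * Complex.normSq (x i) :=
          Finset.sum_le_sum fun i _ =>
            mul_le_mul_of_nonneg_right (hρle i) (Complex.normSq_nonneg _)
        have h6 : ∑ i, (K - ρ) * Complex.normSq (x i) = (K - ρ) * N := by
          rw [hN, Finset.mul_sum]
        rw [h3, h4] at h2
        have h7 := mul_le_mul_of_nonneg_left (h5.trans_eq h6)
          (by positivity : (0:ℝ) ≤ 4 * cmax)
        linarith [h1, h2, h7]
      rw [div_lt_iff₀ (by positivity)]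
      nlinarith [hQhigh, mul_pos (mul_pos hcmax hρpos) hNpos]

/-- normal ellipticity of the principal symbol: if `T > 0` is a real
number, then every complex eigenvalue of `T • F₀⁻¹` is real and lies in
`(T * η⁻¹, T * δ⁻¹]`; in particular every such eigenvalue has strictly positive
real part. -/
theorem spectrum_T_smul_F0_inv
    (m : ℕ) (hm : 1 ≤ m)
    (k : Fin (m + 1) → Fin (m + 1) → ℝ)
    (hsymm : ∀ i j, k i j = k j i)
    (hkpos : ∀ i j, i ≠ j → 0 < k i j)
    (c : Fin (m + 1) → ℝ)
    (hc : ∀ i, 0 ≤ c i)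
    (cmin cmax : ℝ)
    (hcmin : 0 < cmin)
    (hmin : cmin ≤ ∑ i, c i)
    (hmax : ∑ i, c i ≤ cmax)
    (δ₀ : ℝ)
    (hδ₀ : IsLeast {x : ℝ | ∃ i j : Fin (m + 1), i ≠ j ∧ k i j = x} δ₀)
    (δ η : ℝ)
    (hδ : δ = cmin * δ₀)
    (hη : η = 2 * cmax * ∑ i : Fin (m + 1), ∑ j ∈ Finset.univ.erase i, k i j)
    (T : ℝ) (hT : 0 < T) :
    ∀ μ ∈ spectrum ℂ ((T • (MSmatF0 m k c)⁻¹).map Complex.ofReal),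
      (μ.im = 0 ∧ T * η⁻¹ < μ.re ∧ μ.re ≤ T * δ⁻¹) ∧ 0 < μ.re := by
  intro μ hμ
  have hδ₀pos : 0 < δ₀ := by
    obtain ⟨i, j, hij, hk⟩ := hδ₀.1
    exact hk ▸ hkpos i j hij
  have hδpos : 0 < δ := by
    rw [hδ]; positivity
  have hcmax : 0 < cmax := lt_of_lt_of_le hcmin (hmin.trans hmax)
  have hlast0 : Fin.last m ≠ (0 : Fin (m+1)) := by
    intro h
    have := congrArg Fin.val h
    simp [Fin.last] at this
    omega
  have hKpos : 0 < ∑ i : Fin (m + 1), ∑ j ∈ Finset.univ.erase i, k i j := by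
    refine Finset.sum_pos' (fun i _ => Finset.sum_nonneg fun j hj =>
      (hkpos i j (Finset.ne_of_mem_erase hj).symm).le) ⟨0, Finset.mem_univ 0, ?_⟩
    refine Finset.sum_pos' (fun j hj => (hkpos 0 j (Finset.ne_of_mem_erase hj).symm).le)
      ⟨Fin.last m, Finset.mem_erase.2 ⟨hlast0, Finset.mem_univ _⟩,
        hkpos 0 (Fin.last m) (Ne.symm hlast0)⟩
  have hηpos : 0 < η := by
    rw [hη]
    exact mul_pos (by positivity) hKpos
  -- `F₀` is invertible
  have hdet : IsUnit (MSmatF0 m k c).det := by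
    rw [isUnit_iff_ne_zero]
    intro h0
    have hdetc : ((MSmatF0 m k c).map Complex.ofReal).det = 0 := by
      have := (RingHom.map_det Complex.ofRealHom (MSmatF0 m k c)).symm
      rw [show (Complex.ofRealHom.mapMatrix (MSmatF0 m k c))
        = (MSmatF0 m k c).map Complex.ofReal from rfl] at this
      rw [this, h0, map_zero]
    obtain ⟨u, hu0, hueq⟩ := Matrix.exists_mulVec_eq_zero_iff.2 hdetc
    obtain ⟨l, hl, hlow, _⟩ := MSkey m hm k hsymm hkpos c hc cmin cmax hcmin hmin hmax δ₀ hδ₀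
      0 u hu0 (by rw [hueq]; simp)
    have hl0 : l = 0 := by exact_mod_cast hl.symm
    rw [hl0] at hlow
    nlinarith
  have hFinv : ((MSmatF0 m k c).map Complex.ofReal)
      * ((MSmatF0 m k c)⁻¹).map Complex.ofReal = 1 := by
    have h1 : ((MSmatF0 m k c) * (MSmatF0 m k c)⁻¹).map Complex.ofReal
        = ((MSmatF0 m k c).map Complex.ofReal) * ((MSmatF0 m k c)⁻¹).map Complex.ofReal :=
      Matrix.map_mul (f := Complex.ofRealHom)
    rw [← h1, Matrix.mul_nonsing_inv _ hdet]
    ext i j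
    simp [Matrix.map_apply, Matrix.one_apply]
    split <;> simp
  -- get an eigenvector for `μ`
  obtain ⟨v, hv0, hv⟩ : ∃ v : Fin m → ℂ, v ≠ 0 ∧
      ((T • (MSmatF0 m k c)⁻¹).map Complex.ofReal).mulVec v = μ • v := by
    rw [← AlgEquiv.spectrum_eq (Matrix.toLinAlgEquiv' : Matrix (Fin m) (Fin m) ℂ ≃ₐ[ℂ] _),
      ← Module.End.hasEigenvalue_iff_mem_spectrum] at hμ
    obtain ⟨u, hu⟩ := hμ.exists_hasEigenvector
    exact ⟨u, hu.right, by simpa [Matrix.toLinAlgEquiv'_apply] using hu.apply_eq_smul⟩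
  have hsmul : ((T • (MSmatF0 m k c)⁻¹).map Complex.ofReal)
      = (T : ℂ) • (((MSmatF0 m k c)⁻¹).map Complex.ofReal) := by
    ext i j
    simp [Matrix.map_apply, Matrix.smul_apply]
  rw [hsmul, Matrix.smul_mulVec] at hv
  have h1 : (T : ℂ) • v = μ • ((MSmatF0 m k c).map Complex.ofReal).mulVec v := by
    have h2 := congrArg (fun z => ((MSmatF0 m k c).map Complex.ofReal).mulVec z) hv
    rw [Matrix.mulVec_smul, Matrix.mulVec_smul, Matrix.mulVec_mulVec, hFinv,
      Matrix.one_mulVec] at h2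
    exact h2
  have hμne : μ ≠ 0 := by
    intro h0
    rw [h0, zero_smul, smul_eq_zero] at h1
    rcases h1 with h1 | h1
    · exact (ne_of_gt hT) (by exact_mod_cast h1)
    · exact hv0 h1
  have heq : ((MSmatF0 m k c).map Complex.ofReal).mulVec v = (μ⁻¹ * (T : ℂ)) • v := by
    have h2 := congrArg (fun z => μ⁻¹ • z) h1
    simp only [smul_smul, inv_mul_cancel₀ hμne, one_smul] at h2
    exact h2.symm
  obtain ⟨l, hl, hlow, hhigh⟩ := MSkey m hm k hsymm hkpos c hc cmin cmax hcmin hmin hmax δ₀ hδ₀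
    (μ⁻¹ * (T : ℂ)) v hv0 heq
  have hlpos : 0 < l := by nlinarith [hcmin, hδ₀pos, hlow]
  have hlne : (l : ℂ) ≠ 0 := Complex.ofReal_ne_zero.2 (ne_of_gt hlpos)
  have hTl : (T : ℂ) = μ * (l : ℂ) := by
    rw [← hl]
    field_simp
  have hμval : μ = ((T / l : ℝ) : ℂ) := by
    push_cast
    rw [eq_div_iff hlne]
    linear_combination -hTl
  have hre : μ.re = T / l := by rw [hμval]; exact Complex.ofReal_re _
  have him : μ.im = 0 := by rw [hμval]; exact Complex.ofReal_im _
  have hηl : l < η := by rw [hη]; exact hhigh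
  have hδl : δ ≤ l := by rw [hδ]; exact hlow
  have hb1 : T * η⁻¹ < μ.re := by
    rw [hre, ← div_eq_mul_inv]
    exact div_lt_div_of_pos_left hT hlpos hηl
  have hb2 : μ.re ≤ T * δ⁻¹ := by
    rw [hre, ← div_eq_mul_inv]
    exact div_le_div_of_nonneg_left hT.le hδpos hδl
  have hb3 : 0 < μ.re := by rw [hre]; positivity
  exact ⟨⟨him, hb1, hb2⟩, hb3⟩
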